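/- Let v ∈ ℝ³ with 0 < |v| < 1 be fixed, and for ω ∈ S² set z = ω·v. Suppose ξ(ω) = ζ(z) ω × (ω × v) for a C¹ function ζ. Then the condition ∂̸_ω · ξ = 1 on S² (away from ω parallel to v) is equivalent to the ODE ζ'(z)(z² − |v|²) + 2z ζ(z) = 1, whose general solution is ζ(z) = (C − z)/(|v|² − z²) for a constant C. -/

import Mathlib

lemma cross_cross_apply (w u : Fin 3 → ℝ) (i : Fin 3) :
    (crossProduct w (crossProduct w u)) i
      = (∑ k, w k * u k) * w i - (∑ k, w k * w k) * u i := by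
  fin_cases i <;> simp [crossProduct, Fin.sum_univ_three] <;> ring

lemma lagrange_cross (a b : Fin 3 → ℝ) :
    ∑ k, (crossProduct a b) k ^ 2
      = (∑ k, a k ^ 2) * (∑ k, b k ^ 2) - (∑ k, a k * b k) ^ 2 := by
  simp [crossProduct, Fin.sum_univ_three]; ring

lemma fderiv_xi (v : Fin 3 → ℝ) (ζ : ℝ → ℝ) (hζ : ContDiff ℝ 1 ζ)
    (ω : Fin 3 → ℝ) (i j : Fin 3) :
    fderiv ℝ (fun w : Fin 3 → ℝ =>
        ζ (∑ k, w k * v k) * ((∑ k, w k * v k) * w i - (∑ k, w k * w k) * v i))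
      ω (Pi.single j 1)
    = ζ (∑ k, ω k * v k) *
        ((∑ k, ω k * v k) * (if i = j then (1:ℝ) else 0) + ω i * v j
          - v i * (2 * ω j))
      + ((∑ k, ω k * v k) * ω i - (∑ k, ω k * ω k) * v i)
          * (deriv ζ (∑ k, ω k * v k) * v j) := by
  classical
  set z := ∑ k, ω k * v k with hz
  let L : (Fin 3 → ℝ) →L[ℝ] ℝ :=
    ∑ k, v k • (ContinuousLinearMap.proj k : (Fin 3 → ℝ) →L[ℝ] ℝ)
  have hLval : ∀ w : Fin 3 → ℝ, L w = ∑ k, w k * v k := by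
    intro w
    simp [L, ContinuousLinearMap.sum_apply, mul_comm]
  have hL : HasFDerivAt (fun w : Fin 3 → ℝ => ∑ k, w k * v k) L ω := by
    have := L.hasFDerivAt (x := ω)
    exact this.congr_of_eventuallyEq (Filter.Eventually.of_forall fun w => (hLval w).symm)
  let Nd : (Fin 3 → ℝ) →L[ℝ] ℝ :=
    ∑ k, (2 * ω k) • (ContinuousLinearMap.proj k : (Fin 3 → ℝ) →L[ℝ] ℝ)
  have hN : HasFDerivAt (fun w : Fin 3 → ℝ => ∑ k, w k * w k) Nd ω := by
    have h1 : ∀ k : Fin 3, HasFDerivAt (fun w : Fin 3 → ℝ => w k * w k)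
        ((2 * ω k) • (ContinuousLinearMap.proj k : (Fin 3 → ℝ) →L[ℝ] ℝ)) ω := by
      intro k
      have hp : HasFDerivAt (fun w : Fin 3 → ℝ => w k)
          (ContinuousLinearMap.proj k : (Fin 3 → ℝ) →L[ℝ] ℝ) ω :=
        (ContinuousLinearMap.proj k : (Fin 3 → ℝ) →L[ℝ] ℝ).hasFDerivAt
      have := hp.fun_mul hp
      refine this.congr_fderiv ?_
      ext w
      simp [two_mul, add_smul, smul_smul]
    exact HasFDerivAt.fun_sum fun k _ => h1 k
  have hζd : HasDerivAt ζ (deriv ζ z) z :=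
    ((hζ.differentiable one_ne_zero) z).hasDerivAt
  have hcomp : HasFDerivAt (fun w : Fin 3 → ℝ => ζ (∑ k, w k * v k))
      (deriv ζ z • L) ω := hζd.comp_hasFDerivAt ω hL
  have hproj : HasFDerivAt (fun w : Fin 3 → ℝ => w i)
      (ContinuousLinearMap.proj i : (Fin 3 → ℝ) →L[ℝ] ℝ) ω :=
    (ContinuousLinearMap.proj i : (Fin 3 → ℝ) →L[ℝ] ℝ).hasFDerivAt
  have hinner : HasFDerivAt
      (fun w : Fin 3 → ℝ => (∑ k, w k * v k) * w i - (∑ k, w k * w k) * v i)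
      (((∑ k, ω k * v k) • (ContinuousLinearMap.proj i : (Fin 3 → ℝ) →L[ℝ] ℝ)
          + ω i • L) - v i • Nd) ω := by
    exact (hL.mul hproj).sub (hN.mul_const (v i))
  have htot := hcomp.fun_mul hinner
  rw [htot.fderiv]
  have hsingle : ∀ k : Fin 3, (Pi.single j 1 : Fin 3 → ℝ) k = if k = j then 1 else 0 := by
    intro k; by_cases h : k = j <;> simp [h, Pi.single_apply]
  simp only [ContinuousLinearMap.add_apply, ContinuousLinearMap.sub_apply,
    ContinuousLinearMap.smul_apply, smul_eq_mul]
  have hLj : L (Pi.single j 1) = v j := by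
    rw [hLval]; simp [hsingle, Finset.sum_ite_eq']
  have hNj : Nd (Pi.single j 1) = 2 * ω j := by
    simp [Nd, ContinuousLinearMap.sum_apply, hsingle, Finset.sum_ite_eq']
  have hpj : ∀ i : Fin 3, (ContinuousLinearMap.proj i : (Fin 3 → ℝ) →L[ℝ] ℝ)
      (Pi.single j 1) = if i = j then 1 else 0 := by
    intro i; simp [hsingle]
  rw [hLj, hNj, hpj]

lemma div_sum_id (ω v : Fin 3 → ℝ) (a b : ℝ) (hω : ∑ k, ω k * ω k = 1) :
    (∑ i, ∑ j, ((if i = j then (1:ℝ) else 0) - ω i * ω j) *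
      (a * ((∑ k, ω k * v k) * (if i = j then (1:ℝ) else 0) + ω i * v j
          - v i * (2 * ω j))
        + ((∑ k, ω k * v k) * ω i - (∑ k, ω k * ω k) * v i) * (b * v j)))
    = b * ((∑ k, ω k * v k) ^ 2 - ∑ k, v k ^ 2)
      + 2 * (∑ k, ω k * v k) * a := by
  simp only [Fin.sum_univ_three] at hω ⊢
  simp only [Fin.isValue, if_true, if_false, reduceIte, one_ne_zero, zero_ne_one,
    Fin.reduceEq]
  linear_combination (-(b * (v 0 ^ 2 + v 1 ^ 2 + v 2 ^ 2))) * hω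

lemma exists_omega (v : Fin 3 → ℝ) (hm : 0 < ∑ i, v i ^ 2) (z : ℝ)
    (hz : z ^ 2 < ∑ i, v i ^ 2) :
    ∃ ω : Fin 3 → ℝ, (∑ i, ω i ^ 2 = 1) ∧ (∑ i, ω i * v i = z) := by
  set m := ∑ i, v i ^ 2 with hmdef
  obtain ⟨u, hs, hdot⟩ : ∃ u : Fin 3 → ℝ, 0 < ∑ i, u i ^ 2 ∧ ∑ i, u i * v i = 0 := by
    by_cases h : v 1 ^ 2 + v 2 ^ 2 = 0
    · exact ⟨![0, 1, 0], by norm_num [Fin.sum_univ_three, Matrix.cons_val_two, Matrix.tail_cons, Matrix.head_cons], by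
        have h1 : v 1 = 0 := by nlinarith [sq_nonneg (v 1), sq_nonneg (v 2)]
        simp [Fin.sum_univ_three, h1]⟩
    · refine ⟨![0, -v 2, v 1], ?_, by simp [Fin.sum_univ_three]; ring⟩
      have : 0 ≤ v 1 ^ 2 + v 2 ^ 2 := by positivity
      have hpos : 0 < v 1 ^ 2 + v 2 ^ 2 := lt_of_le_of_ne this (Ne.symm h)
      simp [Fin.sum_univ_three]
      nlinarith
  set s := ∑ i, u i ^ 2 with hsdef
  set c := Real.sqrt ((1 - z ^ 2 / m) / s) with hcdef
  have hznn : 0 ≤ (1 - z ^ 2 / m) / s := by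
    have : z ^ 2 / m ≤ 1 := by
      rw [div_le_one hm]; exact le_of_lt hz
    have h1 : 0 ≤ 1 - z ^ 2 / m := by linarith
    positivity
  have hc2 : c ^ 2 = (1 - z ^ 2 / m) / s := Real.sq_sqrt hznn
  refine ⟨fun i => (z / m) * v i + c * u i, ?_, ?_⟩
  · have expand : ∑ i, ((z / m) * v i + c * u i) ^ 2
        = (z / m) ^ 2 * (∑ i, v i ^ 2) + (2 * (z / m) * c) * (∑ i, u i * v i)
          + c ^ 2 * (∑ i, u i ^ 2) := by
      simp only [Fin.sum_univ_three]; ring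
    rw [expand, hdot, hc2, ← hmdef, ← hsdef]
    field_simp
    ring
  · have expand : ∑ i, ((z / m) * v i + c * u i) * v i
        = (z / m) * (∑ i, v i ^ 2) + c * (∑ i, u i * v i) := by
      simp only [Fin.sum_univ_three]; ring
    rw [expand, hdot, ← hmdef]
    field_simp
    ring

lemma mem_Ioo_sqrt {m z : ℝ} :
    z ∈ Set.Ioo (-Real.sqrt m) (Real.sqrt m) ↔ z ^ 2 < m := by
  rw [Set.mem_Ioo, ← abs_lt]
  rw [show z ^ 2 = |z| ^ 2 by rw [sq_abs]]
  exact Real.lt_sqrt (abs_nonneg z)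

lemma ode_iff_sol (m : ℝ) (hm : 0 < m) (ζ : ℝ → ℝ) (hζ : ContDiff ℝ 1 ζ) :
    (∀ z ∈ Set.Ioo (-Real.sqrt m) (Real.sqrt m),
        deriv ζ z * (z ^ 2 - m) + 2 * z * ζ z = 1) ↔
      ∃ C : ℝ, ∀ z ∈ Set.Ioo (-Real.sqrt m) (Real.sqrt m),
        ζ z = (C - z) / (m - z ^ 2) := by
  have hζd : ∀ x : ℝ, HasDerivAt ζ (deriv ζ x) x :=
    fun x => ((hζ.differentiable one_ne_zero) x).hasDerivAt
  have hder : ∀ x : ℝ, HasDerivAt (fun t => ζ t * (t ^ 2 - m))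
      (deriv ζ x * (x ^ 2 - m) + ζ x * (2 * x)) x := by
    intro x
    have h1 : HasDerivAt (fun t : ℝ => t ^ 2 - m) (2 * x) x := by
      simpa using ((hasDerivAt_pow 2 x).sub_const m)
    exact (hζd x).mul h1
  constructor
  · intro h
    set g : ℝ → ℝ := fun t => ζ t * (t ^ 2 - m) - t with hg
    have hgd : ∀ x : ℝ, HasDerivAt g
        (deriv ζ x * (x ^ 2 - m) + ζ x * (2 * x) - 1) x :=
      fun x => (hder x).sub (hasDerivAt_id x)
    have hgz : ∀ x ∈ Set.Ioo (-Real.sqrt m) (Real.sqrt m), HasDerivAt g 0 x := by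
      intro x hx
      have h0 : deriv ζ x * (x ^ 2 - m) + ζ x * (2 * x) - 1 = 0 := by
        linear_combination h x hx
      rw [← h0]; exact hgd x
    have hfd : ∀ x ∈ Set.Ioo (-Real.sqrt m) (Real.sqrt m), fderiv ℝ g x = 0 := by
      intro x hx
      have h0 : HasFDerivAt g (0 : ℝ →L[ℝ] ℝ) x := by
        have h1 := (hgz x hx).hasFDerivAt
        have h2 : ContinuousLinearMap.toSpanSingleton ℝ (0:ℝ) = 0 := by
          ext t; simp
        rwa [h2] at h1
      exact h0.fderiv
    have hdiff : Differentiable ℝ g := fun x => (hgd x).differentiableAt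
    have h0mem : (0 : ℝ) ∈ Set.Ioo (-Real.sqrt m) (Real.sqrt m) := by
      rw [mem_Ioo_sqrt]; simpa using hm
    refine ⟨m * ζ 0, ?_⟩
    intro z hz
    have hconst : g z = g 0 :=
      (convex_Ioo _ _).is_const_of_fderivWithin_eq_zero hdiff.differentiableOn
        (fun t ht => by rw [fderivWithin_of_isOpen isOpen_Ioo ht]; exact hfd t ht)
        hz h0mem
    have hz2 : z ^ 2 < m := mem_Ioo_sqrt.mp hz
    have hne : m - z ^ 2 ≠ 0 := by nlinarith
    rw [eq_div_iff hne]
    have : ζ z * (z ^ 2 - m) - z = ζ 0 * (0 ^ 2 - m) - 0 := hconst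
    linear_combination -this
  · rintro ⟨C, hC⟩ z hz
    have hz2 : z ^ 2 < m := mem_Ioo_sqrt.mp hz
    have hnb : Set.Ioo (-Real.sqrt m) (Real.sqrt m) ∈ nhds z :=
      isOpen_Ioo.mem_nhds hz
    have heq : (fun t => ζ t * (t ^ 2 - m)) =ᶠ[nhds z] (fun t => t - C) := by
      filter_upwards [hnb] with t ht
      have ht2 : t ^ 2 < m := mem_Ioo_sqrt.mp ht
      have hne : m - t ^ 2 ≠ 0 := by nlinarith
      rw [hC t ht]
      field_simp
      ring
    have hd1 : deriv (fun t => ζ t * (t ^ 2 - m)) z = deriv (fun t => t - C) z :=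
      heq.deriv_eq
    have hd2 : deriv (fun t : ℝ => t - C) z = 1 := by
      simp
    have hd3 : deriv (fun t => ζ t * (t ^ 2 - m)) z
        = deriv ζ z * (z ^ 2 - m) + ζ z * (2 * z) := (hder z).deriv
    rw [hd3, hd2] at hd1
    linear_combination hd1

/-- For `ξ(ω) = ζ(ω·v) ω × (ω × v)`, the condition `∂̸_ω · ξ = 1` on the unit
sphere (away from `ω` parallel to `v`) is equivalent to the ODE
`ζ'(z)(z² − |v|²) + 2z ζ(z) = 1` on `(−|v|,|v|)`, whose general solution is
`ζ(z) = (C − z)/(|v|² − z²)`. -/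
theorem xi_ansatz_ode (v : Fin 3 → ℝ) (hv0 : 0 < ∑ i, v i ^ 2)
    (hv1 : ∑ i, v i ^ 2 < 1) (ζ : ℝ → ℝ) (hζ : ContDiff ℝ 1 ζ) :
    let nv : ℝ := Real.sqrt (∑ i, v i ^ 2)
    let ξ : (Fin 3 → ℝ) → Fin 3 → ℝ := fun w =>
      ζ (∑ i, w i * v i) • crossProduct w (crossProduct w v)
    ((∀ ω : Fin 3 → ℝ, (∑ i, ω i ^ 2 = 1) → crossProduct ω v ≠ 0 →
        (∑ i, ∑ j, ((if i = j then (1 : ℝ) else 0) - ω i * ω j) *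
          fderiv ℝ (fun w => ξ w i) ω (Pi.single j 1)) = 1) ↔
      (∀ z ∈ Set.Ioo (-nv) nv, deriv ζ z * (z ^ 2 - ∑ i, v i ^ 2) + 2 * z * ζ z = 1)) ∧
    ((∀ z ∈ Set.Ioo (-nv) nv, deriv ζ z * (z ^ 2 - ∑ i, v i ^ 2) + 2 * z * ζ z = 1) ↔
      ∃ C : ℝ, ∀ z ∈ Set.Ioo (-nv) nv, ζ z = (C - z) / ((∑ i, v i ^ 2) - z ^ 2)) := by
  intro nv ξ
  have hfun : ∀ i : Fin 3, (fun w => ξ w i)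
      = (fun w : Fin 3 → ℝ => ζ (∑ k, w k * v k) *
          ((∑ k, w k * v k) * w i - (∑ k, w k * w k) * v i)) := by
    intro i; funext w
    show (ζ (∑ k, w k * v k) • crossProduct w (crossProduct w v)) i = _
    rw [Pi.smul_apply, smul_eq_mul, cross_cross_apply]
  have key : ∀ ω : Fin 3 → ℝ, (∑ i, ω i ^ 2 = 1) →
      (∑ i, ∑ j, ((if i = j then (1 : ℝ) else 0) - ω i * ω j) *
          fderiv ℝ (fun w => ξ w i) ω (Pi.single j 1))
      = deriv ζ (∑ k, ω k * v k) * ((∑ k, ω k * v k) ^ 2 - ∑ k, v k ^ 2)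
          + 2 * (∑ k, ω k * v k) * ζ (∑ k, ω k * v k) := by
    intro ω hω
    have hω' : ∑ k, ω k * ω k = 1 := by
      simpa [pow_two] using hω
    simp only [hfun]
    simp only [fderiv_xi v ζ hζ ω]
    exact div_sum_id ω v (ζ (∑ k, ω k * v k)) (deriv ζ (∑ k, ω k * v k)) hω'
  constructor
  · constructor
    · intro h z hz
      have hz2 : z ^ 2 < ∑ i, v i ^ 2 := mem_Ioo_sqrt.mp hz
      obtain ⟨ω, hω1, hω2⟩ := exists_omega v hv0 z hz2
      have hcross : crossProduct ω v ≠ 0 := by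
        intro hc
        have hl := lagrange_cross ω v
        rw [hc, hω1, hω2] at hl
        simp at hl
        nlinarith
      have h1 := h ω hω1 hcross
      rw [key ω hω1, hω2] at h1
      exact h1
    · intro h ω hω hcross
      have hpos : 0 < ∑ k, (crossProduct ω v) k ^ 2 := by
        obtain ⟨k, hk⟩ := Function.ne_iff.mp hcross
        refine Finset.sum_pos' (fun i _ => sq_nonneg _) ⟨k, Finset.mem_univ k, ?_⟩
        have : (crossProduct ω v) k ≠ 0 := by simpa using hk
        positivity
      have hl := lagrange_cross ω v
      rw [hω] at hl
      have hz2 : (∑ k, ω k * v k) ^ 2 < ∑ i, v i ^ 2 := by nlinarith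
      have hmem := mem_Ioo_sqrt.mpr hz2
      have h1 := h _ hmem
      rw [key ω hω]
      exact h1
  · exact ode_iff_sol _ hv0 ζ hζ
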